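/- arXiv:1205.3277 — 2 statements merged into one kernel-verified Lean document; each statement's English description precedes it below -/
import Mathlib

section
/- As θ → ∞, the effective capacity C_e(θ) = -(1/θ)·ln(E[e^{-θR}]) converges to the essential infimum of R. -/
open MeasureTheory Real Filter

/-- As θ → ∞ the effective capacity converges to the essential infimum of R. -/
theorem effective_capacity_tendsto_essInf
    {Ω : Type*} [MeasureSpace Ω] [IsProbabilityMeasure (volume : Measure Ω)]
    (R : Ω → ℝ) (hmeas : Measurable R)
    (hnn : ∀ ω, 0 ≤ R ω) (M : ℝ) (hbd : ∀ ω, R ω ≤ M) :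
    Tendsto (fun θ : ℝ => -(1 / θ) * Real.log (∫ ω, Real.exp (-θ * R ω)))
      atTop (nhds (essInf R (volume : Measure Ω))) := by
  set μ := (volume : Measure Ω) with hμ
  set m := essInf R μ with hm
  -- a.e. lower bound by m
  have hbdd : IsBoundedUnder (· ≥ ·) (ae μ) R :=
    ⟨0, Filter.eventually_map.2 (Filter.Eventually.of_forall hnn)⟩
  have hae : ∀ᵐ ω ∂μ, m ≤ R ω := ae_essInf_le hbdd
  -- positivity of measure of {R < m + ε}
  have hpos : ∀ ε : ℝ, 0 < ε → 0 < μ {ω | R ω < m + ε} := by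
    intro ε hε
    by_contra h
    push_neg at h
    have h0 : μ {ω | R ω < m + ε} = 0 := le_antisymm h zero_le
    have hge : ∀ᵐ ω ∂μ, m + ε ≤ R ω := by
      rw [ae_iff]
      simpa [not_le] using h0
    have : m + ε ≤ m := by
      rw [hm, essInf]
      refine le_liminf_of_le ?_ hge
      exact IsBoundedUnder.isCoboundedUnder_ge
        ⟨M, Filter.eventually_map.2 (Filter.Eventually.of_forall hbd)⟩
    linarith
  -- integrability
  have hint : ∀ θ : ℝ, 0 ≤ θ → Integrable (fun ω => Real.exp (-θ * R ω)) μ := by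
    intro θ hθ
    refine Integrable.mono' (integrable_const 1)
      ((Real.measurable_exp.comp (hmeas.const_mul (-θ))).aestronglyMeasurable) ?_
    refine Filter.Eventually.of_forall fun ω => ?_
    rw [Real.norm_eq_abs, abs_of_pos (Real.exp_pos _)]
    apply Real.exp_le_one_iff.2
    have := hnn ω
    nlinarith
  -- main estimates for θ > 0
  rw [Metric.tendsto_atTop]
  intro ε hε
  set p := (μ {ω | R ω < m + ε / 2}).toReal with hp
  have hμp : μ {ω | R ω < m + ε / 2} ≠ 0 := (hpos _ (by linarith)).ne'
  have hppos : 0 < p := by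
    rw [hp, ENNReal.toReal_pos_iff]
    exact ⟨hpos _ (by linarith), measure_lt_top _ _⟩
  have htend : Tendsto (fun θ : ℝ => (-Real.log p) / θ) atTop (nhds 0) :=
    tendsto_const_nhds.div_atTop tendsto_id
  obtain ⟨N, hN⟩ := (Metric.tendsto_atTop.1 htend) (ε / 2) (by linarith)
  refine ⟨max N 1, fun θ hθ => ?_⟩
  have hθ1 : (1:ℝ) ≤ θ := le_trans (le_max_right _ _) hθ
  have hθ0 : 0 < θ := lt_of_lt_of_le one_pos hθ1
  set I := ∫ ω, Real.exp (-θ * R ω) ∂μ with hI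
  -- lower bound on I
  have hIlb : p * Real.exp (-θ * (m + ε / 2)) ≤ I := by
    have hind : ∀ ω, Set.indicator {ω | R ω < m + ε / 2}
        (fun _ => Real.exp (-θ * (m + ε / 2))) ω ≤ Real.exp (-θ * R ω) := by
      intro ω
      by_cases hω : ω ∈ {ω | R ω < m + ε / 2}
      · rw [Set.indicator_of_mem hω]
        apply Real.exp_le_exp.2
        have : R ω < m + ε / 2 := hω
        nlinarith
      · rw [Set.indicator_of_notMem hω]
        exact (Real.exp_pos _).le
    have hmeasset : MeasurableSet {ω | R ω < m + ε / 2} := hmeas measurableSet_Iio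
    have := integral_mono
      ((integrable_const (Real.exp (-θ * (m + ε / 2)))).indicator hmeasset)
      (hint θ hθ0.le) hind
    rw [integral_indicator_const _ hmeasset, smul_eq_mul] at this
    rw [hp]
    rw [measureReal_def] at this
    linarith
  have hIpos : 0 < I := lt_of_lt_of_le (by positivity) hIlb
  -- upper bound on I
  have hIub : I ≤ Real.exp (-θ * m) := by
    have : ∀ᵐ ω ∂μ, Real.exp (-θ * R ω) ≤ Real.exp (-θ * m) := by
      filter_upwards [hae] with ω hω
      apply Real.exp_le_exp.2
      nlinarith
    calc I ≤ ∫ _, Real.exp (-θ * m) ∂μ := integral_mono_ae (hint θ hθ0.le) (integrable_const _) this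
      _ = Real.exp (-θ * m) := by simp
  -- conclude
  have hlb : m ≤ -(1 / θ) * Real.log I := by
    have hlog : Real.log I ≤ -θ * m := by
      calc Real.log I ≤ Real.log (Real.exp (-θ * m)) :=
        Real.log_le_log hIpos hIub
        _ = -θ * m := Real.log_exp _
    have h1 := mul_le_mul_of_nonneg_left hlog (show (0:ℝ) ≤ 1 / θ by positivity)
    have h2 : 1 / θ * (-θ * m) = -m := by field_simp
    linarith
  have hub : -(1 / θ) * Real.log I ≤ m + ε / 2 + (-Real.log p) / θ := by
    have hlog : Real.log p + (-θ * (m + ε / 2)) ≤ Real.log I := by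
      calc Real.log p + (-θ * (m + ε / 2))
          = Real.log (p * Real.exp (-θ * (m + ε / 2))) := by
            rw [Real.log_mul hppos.ne' (Real.exp_pos _).ne', Real.log_exp]
        _ ≤ Real.log I := Real.log_le_log (by positivity) hIlb
    have h1 : -(1 / θ) * Real.log I ≤ -(1 / θ) * (Real.log p + (-θ * (m + ε / 2))) := by
      rw [neg_mul, neg_mul, neg_le_neg_iff]
      exact mul_le_mul_of_nonneg_left hlog (by positivity)
    calc -(1 / θ) * Real.log I ≤ -(1 / θ) * (Real.log p + (-θ * (m + ε / 2))) := h1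
      _ = m + ε / 2 + (-Real.log p) / θ := by field_simp; ring
  -- the correction term is small
  have hsmall : (-Real.log p) / θ < ε / 2 := by
    have := hN θ (le_trans (le_max_left _ _) hθ)
    rw [Real.dist_eq, sub_zero] at this
    calc (-Real.log p) / θ ≤ |(-Real.log p) / θ| := le_abs_self _
      _ < ε / 2 := this
  rw [Real.dist_eq, abs_sub_lt_iff]
  constructor
  · calc -(1 / θ) * Real.log I - m ≤ ε / 2 + (-Real.log p) / θ := by linarith
      _ < ε := by linarith
  · linarith
end

section
/- Let γ₃ < γ₁ ≤ γ₂ (all positive) and define τ = γ₁(γ₁-γ₃)/(γ₂(γ₂-γ₃)), so 0 < τ ≤ 1. If P_A ≥ 0 and P_B = τ·P_A / (1 + (1-τ)·γ₃·P_A), then (γ₁-γ₃)·P_A/(γ₂·(1+γ₃P_A)) = (γ₂-γ₃)·P_B/(γ₁·(1+γ₃P_B)). -/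
/-- Coupling of the source powers in region R₄ of the three-phase protocol:
the two expressions for the relay power coincide. -/
theorem region_four_power_coupling
    (γ₁ γ₂ γ₃ τ PA PB : ℝ)
    (h3 : 0 < γ₃) (h31 : γ₃ < γ₁) (h12 : γ₁ ≤ γ₂)
    (hτ : τ = γ₁ * (γ₁ - γ₃) / (γ₂ * (γ₂ - γ₃)))
    (hPA : 0 ≤ PA)
    (hPB : PB = τ * PA / (1 + (1 - τ) * γ₃ * PA)) :
    (γ₁ - γ₃) * PA / (γ₂ * (1 + γ₃ * PA)) =
      (γ₂ - γ₃) * PB / (γ₁ * (1 + γ₃ * PB)) := by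
  have h2 : γ₃ < γ₂ := lt_of_lt_of_le h31 h12
  have hγ1 : (0:ℝ) < γ₁ := h3.trans h31
  have hγ2 : (0:ℝ) < γ₂ := h3.trans h2
  have hτ1 : τ ≤ 1 := by
    rw [hτ, div_le_one (by nlinarith)]
    nlinarith
  have hD : 0 < 1 + (1 - τ) * γ₃ * PA := by
    have := mul_nonneg (mul_nonneg (by linarith : (0:ℝ) ≤ 1 - τ) h3.le) hPA
    linarith
  have hE : 0 < 1 + γ₃ * PA := by nlinarith
  have hτval : τ * (γ₂ * (γ₂ - γ₃)) = γ₁ * (γ₁ - γ₃) := by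
    rw [hτ, div_mul_cancel₀ _ (mul_pos hγ2 (by linarith : (0:ℝ) < γ₂ - γ₃)).ne']
  subst hPB
  have hPBden : 1 + γ₃ * (τ * PA / (1 + (1 - τ) * γ₃ * PA)) =
      (1 + γ₃ * PA) / (1 + (1 - τ) * γ₃ * PA) := by
    have key : τ * PA / (1 + (1 - τ) * γ₃ * PA) * (1 + (1 - τ) * γ₃ * PA) = τ * PA :=
      div_mul_cancel₀ _ hD.ne'
    rw [eq_div_iff hD.ne']; linear_combination γ₃ * key
  rw [hPBden]
  rw [div_eq_div_iff (by positivity) (by positivity)]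
  field_simp
  have hD' : (1 + γ₃ * PA * (1 - τ)) ≠ 0 := by nlinarith
  rw [div_left_inj' hD']
  nlinarith [mul_nonneg hPA hE.le, sq_nonneg PA]
end
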